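/- Let B > 0, t ∈ (0,1), T = 1/t, and let B̃₊ := B/q̃₊(t) where q̃₊(t) = √((1−t³)(5+t³)/(5(1−t⁴))). The function ỹ₊(x) := [tanh(tanh⁻¹(t^{3/2}) + 1.5√2·B̃₊·(1−x))]^{−2/3} satisfies ỹ₊″ = B̃₊²·(5ỹ₊⁴ − 4ỹ₊ − ỹ₊^{−2}) on [0,1], with ỹ₊(1) = T and ỹ₊(0) = (1 + 2/(exp(2·tanh⁻¹(t^{3/2}) + 3√2·B̃₊) − 1))^{2/3}. -/

import Mathlib

/-- The inverse hyperbolic tangent, `tanh⁻¹ x = (1/2) log((1+x)/(1-x))`. -/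
noncomputable def arctanh (x : ℝ) : ℝ := Real.log ((1 + x) / (1 - x)) / 2

lemma myHasDerivAt_tanh (x : ℝ) :
    HasDerivAt Real.tanh (1 - Real.tanh x ^ 2) x := by
  have hc := (Real.cosh_pos x).ne'
  have h := (Real.hasDerivAt_sinh x).div (Real.hasDerivAt_cosh x) hc
  have hfun : Real.tanh = fun y => Real.sinh y / Real.cosh y :=
    funext fun y => Real.tanh_eq_sinh_div_cosh y
  rw [hfun]
  refine h.congr_deriv ?_
  have hsq := Real.cosh_sq x
  field_simp

lemma my_tanh_eq_exp (x : ℝ) :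
    Real.tanh x = (Real.exp (2*x) - 1) / (Real.exp (2*x) + 1) := by
  have h1 : Real.exp x ≠ 0 := (Real.exp_pos x).ne'
  have h2 : (0:ℝ) < Real.exp x + Real.exp (-x) := by positivity
  have h3 : (0:ℝ) < Real.exp (2*x) + 1 := by positivity
  rw [Real.tanh_eq_sinh_div_cosh, Real.sinh_eq, Real.cosh_eq,
    show (2:ℝ)*x = x + x by ring, Real.exp_add, Real.exp_neg]
  field_simp

lemma my_tanh_arctanh {s : ℝ} (h0 : 0 < s) (h1 : s < 1) :
    Real.tanh (arctanh s) = s := by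
  have hs : (0:ℝ) < (1 + s) / (1 - s) := by
    apply div_pos <;> linarith
  have hE : Real.exp (2 * arctanh s) = (1 + s) / (1 - s) := by
    rw [arctanh, show 2 * (Real.log ((1 + s) / (1 - s)) / 2)
      = Real.log ((1 + s) / (1 - s)) by ring, Real.exp_log hs]
  rw [my_tanh_eq_exp, hE]
  have hne : (1:ℝ) - s ≠ 0 := by linarith
  have hden : (1 + s) / (1 - s) + 1 ≠ 0 := by
    have : (1 + s) / (1 - s) + 1 = 2 / (1 - s) := by field_simp; ring
    rw [this]
    positivity
  field_simp
  ring

lemma my_arctanh_pos {s : ℝ} (h0 : 0 < s) (h1 : s < 1) : 0 < arctanh s := by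
  have : 1 < (1 + s) / (1 - s) := by
    rw [lt_div_iff₀ (by linarith)]; linarith
  have := Real.log_pos this
  unfold arctanh; linarith

lemma my_tanh_pos {v : ℝ} (hv : 0 < v) : 0 < Real.tanh v := by
  rw [Real.tanh_eq_sinh_div_cosh]
  exact div_pos (by rwa [Real.sinh_pos_iff]) (Real.cosh_pos v)

lemma cube_rpow {r : ℝ} (hr : 0 < r) {p : ℝ} {n : ℕ} (hpn : 3 * p = -(n:ℝ)) :
    (r ^ (3:ℕ)) ^ p = (r ^ n)⁻¹ := by
  rw [← Real.rpow_natCast r 3, ← Real.rpow_mul hr.le,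
    show ((3:ℕ):ℝ) * p = -(n:ℝ) by push_cast; linarith [hpn],
    Real.rpow_neg hr.le, Real.rpow_natCast]

theorem upper_envelope_formula (B t T qp Bp : ℝ)
    (hB : 0 < B) (ht : t ∈ Set.Ioo (0:ℝ) 1) (hT : T = 1 / t)
    (hqp : qp = Real.sqrt ((1 - t ^ 3) * (5 + t ^ 3) / (5 * (1 - t ^ 4))))
    (hBp : Bp = B / qp)
    (y : ℝ → ℝ)
    (hy : ∀ x : ℝ, y x =
      (Real.tanh (arctanh (t ^ ((3:ℝ)/2)) + 1.5 * Real.sqrt 2 * Bp * (1 - x)))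
        ^ (-(2:ℝ)/3)) :
    (∀ x ∈ Set.Icc (0:ℝ) 1,
      deriv (deriv y) x = Bp ^ 2 * (5 * y x ^ 4 - 4 * y x - y x ^ (-(2:ℝ)))) ∧
    y 1 = T ∧
    y 0 = (1 + 2 / (Real.exp (2 * arctanh (t ^ ((3:ℝ)/2)) + 3 * Real.sqrt 2 * Bp) - 1))
            ^ ((2:ℝ)/3) := by
  obtain ⟨ht0, ht1⟩ := ht
  have hyf : y = fun x => (Real.tanh (arctanh (t ^ ((3:ℝ)/2))
      + 1.5 * Real.sqrt 2 * Bp * (1 - x))) ^ (-(2:ℝ)/3) := funext hy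
  subst hyf
  set s : ℝ := t ^ ((3:ℝ)/2) with hsdef
  have hs0 : 0 < s := Real.rpow_pos_of_pos ht0 _
  have hs1 : s < 1 := Real.rpow_lt_one ht0.le ht1 (by norm_num)
  set a : ℝ := arctanh s with hadef
  have ha0 : 0 < a := my_arctanh_pos hs0 hs1
  have hqp0 : 0 < qp := by
    rw [hqp]
    apply Real.sqrt_pos.2
    have h3 : t ^ 3 < 1 := pow_lt_one₀ ht0.le ht1 (by norm_num)
    have h4 : t ^ 4 < 1 := pow_lt_one₀ ht0.le ht1 (by norm_num)
    have h3' : 0 < t ^ 3 := pow_pos ht0 3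
    apply div_pos (mul_pos (by linarith) (by linarith)) (by linarith)
  have hBp0 : 0 < Bp := hBp ▸ div_pos hB hqp0
  set c : ℝ := 1.5 * Real.sqrt 2 * Bp with hcdef
  have hsqrt2 : (0:ℝ) < Real.sqrt 2 := Real.sqrt_pos.2 (by norm_num)
  have hc0 : 0 < c := by positivity
  have hcc : Bp ^ 2 = 2/9 * c ^ 2 := by
    have h2 : Real.sqrt 2 ^ 2 = 2 := Real.sq_sqrt (by norm_num)
    rw [hcdef, mul_pow, mul_pow, h2]
    norm_num
    ring
  have hcform := hcdef
  clear_value c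
  -- the derivative of the inner affine function
  have hu : ∀ z : ℝ, HasDerivAt (fun x : ℝ => a + c * (1 - x)) (-c) z := by
    intro z
    have h : HasDerivAt (fun x : ℝ => 1 - x) (-1) z := (hasDerivAt_id z).const_sub 1
    have h2 := (h.const_mul c).const_add a
    rw [show -c = c * -1 by ring]
    exact h2
  -- open set on which everything is smooth
  set S : Set ℝ := Set.Iio (1 + a / c) with hSdef
  have hSopen : IsOpen S := isOpen_Iio
  have hmemS : ∀ x ∈ Set.Icc (0:ℝ) 1, x ∈ S := by
    intro x hx
    have : 0 < a / c := div_pos ha0 hc0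
    simp only [hSdef, Set.mem_Iio]
    have := hx.2
    linarith
  have hupos : ∀ z ∈ S, 0 < a + c * (1 - z) := by
    intro z hz
    simp only [hSdef, Set.mem_Iio] at hz
    have h1 : c * z < c * (1 + a / c) := mul_lt_mul_of_pos_left hz hc0
    have h2 : c * (1 + a / c) = c + a := by field_simp
    nlinarith
  have hgpos : ∀ z ∈ S, 0 < Real.tanh (a + c * (1 - z)) :=
    fun z hz => my_tanh_pos (hupos z hz)
  -- derivative of tanh composed with the affine function
  have hstep1 : ∀ z ∈ S, HasDerivAt (fun x => Real.tanh (a + c * (1 - x)))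
      ((1 - Real.tanh (a + c * (1 - z)) ^ 2) * (-c)) z := by
    intro z _
    exact (myHasDerivAt_tanh (a + c * (1 - z))).comp z (hu z)
  set y1 : ℝ → ℝ := fun x => 2 * c / 3
      * Real.tanh (a + c * (1 - x)) ^ (-(5:ℝ)/3)
      * (1 - Real.tanh (a + c * (1 - x)) ^ 2) with hy1def
  -- first derivative
  have hd1 : ∀ z ∈ S, HasDerivAt
      (fun x => (Real.tanh (a + c * (1 - x))) ^ (-(2:ℝ)/3)) (y1 z) z := by
    intro z hz
    have hG := hgpos z hz
    have h := (Real.hasDerivAt_rpow_const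
      (p := -(2:ℝ)/3) (Or.inl hG.ne')).comp z (hstep1 z hz)
    refine h.congr_deriv ?_
    simp only [hy1def]
    rw [show (-(2:ℝ)/3 - 1) = -(5:ℝ)/3 by norm_num]
    ring
  have hEq : Set.EqOn (deriv (fun x => (Real.tanh (a + c * (1 - x))) ^ (-(2:ℝ)/3))) y1 S :=
    fun z hz => (hd1 z hz).deriv
  refine ⟨?_, ?_, ?_⟩
  · -- second derivative
    intro x hx
    have hxS : x ∈ S := hmemS x hx
    have hG := hgpos x hxS
    set G : ℝ := Real.tanh (a + c * (1 - x)) with hGdef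
    -- derivative of y1 at x
    have h5 : HasDerivAt (fun x => Real.tanh (a + c * (1 - x)) ^ (-(5:ℝ)/3))
        ((-(5:ℝ)/3 * G ^ (-(5:ℝ)/3 - 1)) * ((1 - G ^ 2) * (-c))) x :=
      by have h := (Real.hasDerivAt_rpow_const (p := -(5:ℝ)/3) (Or.inl hG.ne')).comp x (hstep1 x hxS); exact h
    have hsq : HasDerivAt (fun x => 1 - Real.tanh (a + c * (1 - x)) ^ 2)
        (-((2:ℕ) * G ^ 1 * ((1 - G ^ 2) * (-c)))) x :=
      ((hstep1 x hxS).pow 2).const_sub 1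
    have hy1d : HasDerivAt y1
        ((2 * c / 3 * ((-(5:ℝ)/3 * G ^ (-(5:ℝ)/3 - 1)) * ((1 - G ^ 2) * (-c)))) * (1 - G ^ 2)
          + (2 * c / 3 * G ^ (-(5:ℝ)/3)) * (-((2:ℕ) * G ^ 1 * ((1 - G ^ 2) * (-c))))) x :=
      ((h5.const_mul (2 * c / 3)).mul hsq)
    have hdd : deriv (deriv (fun x => (Real.tanh (a + c * (1 - x))) ^ (-(2:ℝ)/3))) x
        = (2 * c / 3 * ((-(5:ℝ)/3 * G ^ (-(5:ℝ)/3 - 1)) * ((1 - G ^ 2) * (-c)))) * (1 - G ^ 2)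
          + (2 * c / 3 * G ^ (-(5:ℝ)/3)) * (-((2:ℕ) * G ^ 1 * ((1 - G ^ 2) * (-c)))) := by
      have hev : deriv (fun x => (Real.tanh (a + c * (1 - x))) ^ (-(2:ℝ)/3)) =ᶠ[nhds x] y1 :=
        Filter.eventuallyEq_of_mem (hSopen.mem_nhds hxS) hEq
      rw [hev.deriv_eq]
      exact hy1d.deriv
    rw [hdd]
    -- algebra
    obtain ⟨r, hr0, hr3⟩ : ∃ r : ℝ, 0 < r ∧ r ^ (3:ℕ) = G :=
      ⟨G ^ ((1:ℝ)/3), Real.rpow_pos_of_pos hG _, by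
        rw [← Real.rpow_natCast (G ^ ((1:ℝ)/3)) 3, ← Real.rpow_mul hG.le]
        norm_num⟩
    have e2 : G ^ (-(2:ℝ)/3) = (r ^ 2)⁻¹ := by
      rw [← hr3]; exact cube_rpow hr0 (by norm_num)
    have e5 : G ^ (-(5:ℝ)/3) = (r ^ 5)⁻¹ := by
      rw [← hr3]; exact cube_rpow hr0 (by norm_num)
    have e8 : G ^ (-(5:ℝ)/3 - 1) = (r ^ 8)⁻¹ := by
      rw [← hr3, show (-(5:ℝ)/3 - 1) = -(8:ℝ)/3 by norm_num]
      exact cube_rpow hr0 (by norm_num)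
    have einv : (G ^ (-(2:ℝ)/3)) ^ (-(2:ℝ)) = r ^ 4 := by
      rw [e2, show (-(2:ℝ)) = ((-2 : ℤ) : ℝ) by norm_num, Real.rpow_intCast]
      rw [zpow_neg, zpow_two]
      field_simp
    have hrne : r ≠ 0 := hr0.ne'
    rw [hy x, ← hGdef, e8, e5, einv, e2, ← hr3, hcc]
    field_simp
    ring
  · -- y 1 = T
    have h1 := hy 1
    rw [h1]
    rw [show a + c * (1 - 1) = a by ring, hadef, my_tanh_arctanh hs0 hs1, hsdef,
      ← Real.rpow_mul ht0.le]
    rw [show (3:ℝ)/2 * (-(2:ℝ)/3) = -1 by norm_num, Real.rpow_neg_one, hT, one_div]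
  · -- y 0
    have h0 := hy 0
    rw [h0]
    have hv : a + c * (1 - 0) = a + c := by ring
    rw [hv]
    have hv0 : 0 < a + c := by linarith
    set E : ℝ := Real.exp (2 * (a + c)) with hEdef
    have hE1 : 1 < E := by
      rw [hEdef]
      have : (0:ℝ) < 2 * (a + c) := by linarith
      calc (1:ℝ) = Real.exp 0 := Real.exp_zero.symm
        _ < _ := Real.exp_lt_exp.2 this
    have harg : 2 * a + 3 * Real.sqrt 2 * Bp = 2 * (a + c) := by
      rw [hcform]; ring
    rw [harg, ← hEdef]
    have htv : Real.tanh (a + c) = (E - 1) / (E + 1) := my_tanh_eq_exp (a + c)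
    have hpos : (0:ℝ) < (E - 1) / (E + 1) := div_pos (by linarith) (by linarith)
    rw [htv, show (-(2:ℝ)/3) = -((2:ℝ)/3) by norm_num, Real.rpow_neg hpos.le,
      ← Real.inv_rpow hpos.le]
    congr 1
    have hEne : E - 1 ≠ 0 := by linarith
    rw [inv_div]
    field_simp
    ring
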